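/- Let μ be a probability measure on G = (ℤ/2ℤ)³ with a_max = μ({0}) and a_max > 1/4. Suppose there is a decomposition G = X₁ ⊕ X₂ (X₁ ∈ 𝔄₁, X₂ ∈ 𝔄₂, X₁ ∩ X₂ = {0}) such that condition II.4 holds: (a) μ(X₂) = 1/2; (b) for every subgroup K ∈ 𝔄₂ with K ≠ X₂, μ ∈ V(K) or μ ∈ V(K̄); and (c) for every subgroup K ∈ 𝔄₂, μ ∈ U(K) or μ ∈ U(K̄). Then μ ∈ TEC(G). -/
import Mathlib


open scoped BigOperators

/-- The group `G = (ℤ/2ℤ)³`. -/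
abbrev G : Type := ZMod 2 × ZMod 2 × ZMod 2

/-- The character pairing `(x,y) = (-1)^(x₁y₁+x₂y₂+x₃y₃)`. -/
noncomputable def pairing (x y : G) : ℝ :=
  (-1 : ℝ) ^ (x.1.val * y.1.val + x.2.1.val * y.2.1.val + x.2.2.val * y.2.2.val)

/-- A probability measure on `G`, given by its mass function. -/
def IsProb (p : G → ℝ) : Prop := (∀ x, 0 ≤ p x) ∧ ∑ x : G, p x = 1

/-- The characteristic function `μ̂(y) = Σ_x (x,y) μ({x})`. -/
noncomputable def charFn (p : G → ℝ) (y : G) : ℝ := ∑ x : G, pairing x y * p x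

/-- The measure of a set `E ⊆ G`. -/
noncomputable def measOf (p : G → ℝ) (E : Set G) : ℝ := ∑ x : G, E.indicator p x

/-- `μ` has a trivial equivalence class: every probability measure `ν` with
`|ν̂| = |μ̂|` is a shift `μₓ` of `μ` (central symmetry is the identity on `G`). -/
def TEC (p : G → ℝ) : Prop :=
  ∀ q : G → ℝ, IsProb q → (∀ y : G, |charFn q y| = |charFn p y|) →
    ∃ x : G, ∀ e : G, q e = p (e + x)

/-- `u(E) = max_{x ∈ E} μ({x})`. -/
noncomputable def uOf (p : G → ℝ) (E : Set G) : ℝ := sSup (p '' E)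

/-- `v(E) = min_{x ∈ E} μ({x})`. -/
noncomputable def vOf (p : G → ℝ) (E : Set G) : ℝ := sInf (p '' E)

/-- `μ ∈ U(E)` iff `2 u(E) > μ(E)`. -/
def USet (p : G → ℝ) (E : Set G) : Prop := measOf p E < 2 * uOf p E

/-- `μ ∈ V(E)` iff `1/2 + 2 v(E) < μ(E)`. -/
def VSet (p : G → ℝ) (E : Set G) : Prop := 1/2 + 2 * vOf p E < measOf p E

def dot (x y : G) : ZMod 2 := x.1*y.1 + x.2.1*y.2.1 + x.2.2*y.2.2

lemma pairing_eq (x y : G) : pairing x y = (-1:ℝ)^((dot x y).val) := by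
  obtain ⟨a, b, c⟩ := x; obtain ⟨d, e, f⟩ := y
  have h : ∀ u : ZMod 2, u = 0 ∨ u = 1 := by decide
  rcases h a with rfl|rfl <;> rcases h b with rfl|rfl <;> rcases h c with rfl|rfl <;>
  rcases h d with rfl|rfl <;> rcases h e with rfl|rfl <;> rcases h f with rfl|rfl <;>
  norm_num [pairing, dot, show ZMod.val (1:ZMod 2) = 1 from rfl,
    show ZMod.val (2:ZMod 2) = 0 from rfl, show ZMod.val (3:ZMod 2) = 1 from rfl]

lemma sumZ (f : ZMod 2 → ℝ) : ∑ x : ZMod 2, f x = f 0 + f 1 := Fin.sum_univ_two f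

lemma sumG (f : G → ℝ) : ∑ x : G, f x = f (0,0,0) + f (0,0,1) + f (0,1,0) + f (0,1,1) + f (1,0,0) + f (1,0,1) + f (1,1,0) + f (1,1,1) := by
  rw [Fintype.sum_prod_type, sumZ, Fintype.sum_prod_type, Fintype.sum_prod_type,
    sumZ, sumZ, sumZ, sumZ, sumZ, sumZ]
  ring

lemma neg_one_val_add (u v : ZMod 2) :
    (-1:ℝ)^((u+v).val) = (-1)^(u.val) * (-1)^(v.val) := by
  have h : ∀ u : ZMod 2, u = 0 ∨ u = 1 := by decide
  rcases h u with rfl|rfl <;> rcases h v with rfl|rfl <;>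
  norm_num [show ZMod.val (0:ZMod 2) = 0 from rfl, show ZMod.val (1:ZMod 2) = 1 from rfl,
    show ((0:ZMod 2)+0) = 0 from rfl, show ((0:ZMod 2)+1) = 1 from rfl,
    show ((1:ZMod 2)+0) = 1 from rfl, show ((1:ZMod 2)+1) = 0 from rfl,
    show ZMod.val (2:ZMod 2) = 0 from rfl, show ((2:ZMod 2)) = 0 from rfl]

lemma dot_add_left (x t y : G) : dot (x + t) y = dot x y + dot t y := by
  simp only [dot, Prod.fst_add, Prod.snd_add]; ring

lemma pairing_add (x t y : G) : pairing (x + t) y = pairing x y * pairing t y := by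
  rw [pairing_eq, pairing_eq, pairing_eq, dot_add_left, neg_one_val_add]

lemma pairing_self_mul (x y : G) : pairing x y * pairing x y = 1 := by
  rw [pairing_eq, ← pow_add, ← two_mul, pow_mul]; norm_num

lemma pairing_zero_right (x : G) : pairing x 0 = 1 := by
  rw [pairing_eq, show dot x 0 = 0 by simp [dot]]; norm_num

lemma pairing_zero_left (y : G) : pairing 0 y = 1 := by
  rw [pairing_eq, show dot 0 y = 0 by simp [dot]]; norm_num

lemma sum_pairing (z : G) : ∑ y : G, pairing z y = if z = 0 then 8 else 0 := by
  obtain ⟨a, b, c⟩ := z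
  have h : ∀ u : ZMod 2, u = 0 ∨ u = 1 := by decide
  rcases h a with rfl|rfl <;> rcases h b with rfl|rfl <;> rcases h c with rfl|rfl <;>
  · rw [sumG]
    norm_num [pairing, show ZMod.val (0:ZMod 2) = 0 from rfl, show ZMod.val (1:ZMod 2) = 1 from rfl]

lemma add_self_G (x : G) : x + x = 0 := by
  obtain ⟨a,b,c⟩ := x; have h : ∀ u : ZMod 2, u + u = 0 := by decide
  simp [Prod.ext_iff, h]

lemma inv8 (f : G → ℝ) (e : G) : ∑ y : G, pairing e y * charFn f y = 8 * f e := by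
  unfold charFn
  calc ∑ y : G, pairing e y * ∑ x : G, pairing x y * f x
      = ∑ y : G, ∑ x : G, pairing (e + x) y * f x := by
        refine Finset.sum_congr rfl fun y _ => ?_
        rw [Finset.mul_sum]
        exact Finset.sum_congr rfl fun x _ => by rw [pairing_add]; ring
    _ = ∑ x : G, ∑ y : G, pairing (e + x) y * f x := Finset.sum_comm
    _ = ∑ x : G, (if e + x = 0 then (8:ℝ) else 0) * f x := by
        refine Finset.sum_congr rfl fun x _ => ?_
        rw [← Finset.sum_mul, sum_pairing]
    _ = 8 * f e := by
        rw [Finset.sum_eq_single e]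
        · rw [add_self_G, if_pos rfl]
        · intro x _ hxe
          rw [if_neg, zero_mul]
          intro hc
          apply hxe
          have := congrArg (fun z => z + x) hc
          exact (by simpa [add_assoc, add_self_G, zero_add] using this : e = x).symm
        · intro he; exact absurd (Finset.mem_univ e) he
def Ksub (y : G) : AddSubgroup G where
  carrier := {x | dot x y = 0}
  add_mem' := by
    intro a b ha hb
    simp only [Set.mem_setOf_eq] at *
    rw [dot_add_left, ha, hb, add_zero]
  zero_mem' := by simp only [Set.mem_setOf_eq]; simp [dot]
  neg_mem' := by
    intro a ha
    have h : -a = a := by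
      have := add_self_G a
      exact neg_eq_of_add_eq_zero_left this
    rwa [h]

lemma mem_Ksub (x y : G) : x ∈ Ksub y ↔ dot x y = 0 := Iff.rfl

lemma card_Ksub (y : G) (hy : y ≠ 0) : Nat.card (Ksub y) = 4 := by
  have e : (Ksub y : Set G) = {x : G | dot x y = 0} := rfl
  have : Nat.card (Ksub y) = Nat.card {x : G // dot x y = 0} :=
    Nat.card_congr (Equiv.subtypeEquivRight (fun x => Iff.rfl))
  rw [this, Nat.card_eq_fintype_card, Fintype.card_subtype]
  clear e this
  revert hy; revert y
  decide

lemma Ksub_ne (y y' : G) (h : y ≠ y') : Ksub y ≠ Ksub y' := by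
  have key : ∃ x : G, ¬(dot x y = 0 ↔ dot x y' = 0) := by
    revert h; revert y y'; decide
  obtain ⟨x, hx⟩ := key
  intro hc
  rw [SetLike.ext_iff] at hc
  have := hc x
  rw [mem_Ksub, mem_Ksub] at this
  exact hx this
set_option synthInstance.maxSize 400 in
set_option maxHeartbeats 1000000 in
lemma key_y2 : ∀ a b : G, a ≠ 0 → b ≠ 0 → b ≠ a →
    ∃ y : G, y ≠ 0 ∧ ∀ x : G, ((x = 0 ∨ x = a ∨ x = b ∨ x = a + b) ↔ dot x y = 0) := by decide


lemma exists_y2 (X₂ : AddSubgroup G) (h4 : Nat.card X₂ = 4) :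
    ∃ y₂ : G, y₂ ≠ 0 ∧ ∀ x : G, (x ∈ X₂ ↔ dot x y₂ = 0) := by
  have hset : Nat.card (X₂ : Set G) = 4 := by
    rw [← h4]; exact Nat.card_congr (Equiv.subtypeEquivRight (fun x => SetLike.mem_coe))
  have hncard : (X₂ : Set G).ncard = 4 := by rw [← Nat.card_coe_set_eq]; exact hset
  have ha : ∃ a, a ∈ (X₂ : Set G) ∧ a ≠ 0 := by
    by_contra hcon
    push_neg at hcon
    have hsub : (X₂ : Set G) ⊆ {0} := fun x hx => by simp [hcon x hx]
    have := Set.ncard_le_ncard hsub (Set.finite_singleton 0)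
    rw [hncard, Set.ncard_singleton] at this
    omega
  obtain ⟨a, haX, ha0⟩ := ha
  have hb : ∃ b, b ∈ (X₂ : Set G) ∧ b ≠ 0 ∧ b ≠ a := by
    by_contra hcon
    push_neg at hcon
    have hsub : (X₂ : Set G) ⊆ {0, a} := by
      intro x hx
      rcases eq_or_ne x 0 with h|h
      · simp [h]
      · simp [hcon x hx h]
    have h2 := Set.ncard_le_ncard hsub (Set.toFinite _)
    have h3 : ({0, a} : Set G).ncard ≤ 2 := by
      have := Set.ncard_insert_le (0:G) ({a} : Set G)
      simpa [Set.ncard_singleton] using this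
    rw [hncard] at h2
    omega
  obtain ⟨b, hbX, hb0, hba⟩ := hb
  have hq : ({0, a, b, a+b} : Set G) ⊆ (X₂ : Set G) := by
    intro x hx
    rcases hx with rfl|rfl|rfl|rfl
    · exact zero_mem _
    · exact haX
    · exact hbX
    · exact add_mem haX hbX
  have hqc : ({0, a, b, a+b} : Set G).ncard = 4 := by
    have hfs : ({0,a,b,a+b} : Set G) = (({0,a,b,a+b} : Finset G) : Set G) := by simp
    rw [hfs, Set.ncard_coe_finset]
    have key : ∀ a b : G, a ≠ 0 → b ≠ 0 → b ≠ a →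
        ({0,a,b,a+b} : Finset G).card = 4 := by decide
    exact key a b ha0 hb0 hba
  have heq : ({0,a,b,a+b} : Set G) = (X₂ : Set G) :=
    Set.eq_of_subset_of_ncard_le hq (by rw [hncard, hqc]) (Set.toFinite _)
  have key : ∀ a b : G, a ≠ 0 → b ≠ 0 → b ≠ a →
      ∃ y : G, y ≠ 0 ∧ ∀ x : G, ((x = 0 ∨ x = a ∨ x = b ∨ x = a + b) ↔ dot x y = 0) :=
    key_y2
  obtain ⟨y, hy0, hy⟩ := key a b ha0 hb0 hba
  refine ⟨y, hy0, fun x => ?_⟩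
  rw [← SetLike.mem_coe, ← heq]
  simpa [Set.mem_insert_iff, Set.mem_singleton_iff] using (hy x)

lemma measK (p : G → ℝ) (hp1 : ∑ x : G, p x = 1) (y : G) :
    measOf p (Ksub y : Set G) = (1 + charFn p y)/2 := by
  have key : ∀ x : G, 2 * ((Ksub y : Set G)).indicator p x = p x + pairing x y * p x := by
    intro x
    by_cases h : dot x y = 0
    · rw [Set.indicator_of_mem (show x ∈ (Ksub y : Set G) from h) p, pairing_eq, h]
      norm_num [show ZMod.val (0:ZMod 2) = 0 from rfl] <;> ring
    · rw [Set.indicator_of_notMem (show x ∉ (Ksub y : Set G) from h) p]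
      have h1 : dot x y = 1 := by
        have hv : ∀ v : ZMod 2, v ≠ 0 → v = 1 := by decide
        exact hv _ h
      rw [pairing_eq, h1]
      norm_num [show ZMod.val (1:ZMod 2) = 1 from rfl] <;> ring
  have h2 : 2 * measOf p (Ksub y : Set G) = ∑ x : G, (p x + pairing x y * p x) := by
    unfold measOf
    rw [Finset.mul_sum]
    exact Finset.sum_congr rfl fun x _ => key x
  rw [Finset.sum_add_distrib, hp1] at h2
  have h3 : ∑ x : G, pairing x y * p x = charFn p y := rfl
  rw [h3] at h2
  linarith

lemma measCompl (p : G → ℝ) (hp1 : ∑ x : G, p x = 1) (E : Set G) :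
    measOf p Eᶜ = 1 - measOf p E := by
  have key : ∀ x : G, Eᶜ.indicator p x = p x - E.indicator p x := by
    intro x
    by_cases h : x ∈ E
    · rw [Set.indicator_of_mem h, Set.indicator_of_notMem (by simpa using h)]; ring
    · rw [Set.indicator_of_notMem h, Set.indicator_of_mem (by simpa using h)]; ring
  unfold measOf
  rw [Finset.sum_congr rfl fun x _ => key x, Finset.sum_sub_distrib, hp1]

lemma vOf_mem (p : G → ℝ) (E : Set G) (hE : E.Nonempty) : ∃ x ∈ E, p x = vOf p E := by
  have h1 : (p '' E).Nonempty := hE.image p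
  have h2 : (p '' E).Finite := Set.Finite.image p (Set.toFinite E)
  have := h1.csInf_mem h2
  obtain ⟨x, hx, hpx⟩ := this
  exact ⟨x, hx, hpx⟩

lemma Vextract (p : G → ℝ) (hp0 : ∀ x, 0 ≤ p x) (hp1 : ∑ x : G, p x = 1) (y : G) (hy : y ≠ 0)
    (hV : VSet p (Ksub y : Set G) ∨ VSet p ((Ksub y : Set G))ᶜ) :
    (∃ x, dot x y = 0 ∧ 4 * p x < charFn p y) ∨
    (∃ x, dot x y ≠ 0 ∧ 4 * p x < -charFn p y) := by
  rcases hV with hV|hV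
  · left
    have hne : (Ksub y : Set G).Nonempty := ⟨0, zero_mem _⟩
    obtain ⟨x, hx, hpx⟩ := vOf_mem p _ hne
    refine ⟨x, hx, ?_⟩
    unfold VSet at hV
    rw [measK p hp1 y, ← hpx] at hV
    linarith
  · right
    have hcne : ((Ksub y : Set G))ᶜ.Nonempty := by
      have hgen : ∀ y : G, y ≠ 0 → ∃ x : G, dot x y ≠ 0 := by decide
      obtain ⟨x, hx⟩ := hgen y hy
      exact ⟨x, hx⟩
    obtain ⟨x, hx, hpx⟩ := vOf_mem p _ hcne
    refine ⟨x, hx, ?_⟩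
    unfold VSet at hV
    rw [measCompl p hp1, measK p hp1 y, ← hpx] at hV
    linarith
abbrev B : Type := Bool × Bool × Bool

def dotb (x y : B) : Bool := xor (x.1 && y.1) (xor (x.2.1 && y.2.1) (x.2.2 && y.2.2))

def appB (l : Bool×Bool×Bool×Bool×Bool×Bool×Bool×Bool) (x : B) : Bool :=
  match x with
  | (false,false,false) => l.1
  | (false,false,true) => l.2.1
  | (false,true,false) => l.2.2.1
  | (false,true,true) => l.2.2.2.1
  | (true,false,false) => l.2.2.2.2.1
  | (true,false,true) => l.2.2.2.2.2.1
  | (true,true,false) => l.2.2.2.2.2.2.1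
  | (true,true,true) => l.2.2.2.2.2.2.2

set_option maxRecDepth 100000 in
set_option synthInstance.maxSize 2000 in
set_option synthInstance.maxHeartbeats 1000000 in
set_option maxHeartbeats 8000000 in
lemma trichotomyB : ∀ (l : Bool×Bool×Bool×Bool×Bool×Bool×Bool×Bool) (y₂ : B),
    y₂ ≠ (false,false,false) → appB l (false,false,false) = false → appB l y₂ = false →
    (∃ t : B, ∀ y : B, y ≠ (false,false,false) → y ≠ y₂ → appB l y = dotb t y) ∨
    (∃ t y0 : B, y0 ≠ (false,false,false) ∧ y0 ≠ y₂ ∧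
      ∀ y : B, y ≠ (false,false,false) → y ≠ y₂ → appB l y = xor (dotb t y) (y = y0)) ∨
    (∃ t : B, ∀ y : B, y ≠ (false,false,false) → y ≠ y₂ → appB l y = !(dotb t y)) := by decide

def phi (x : G) : B := (decide (x.1 = 1), decide (x.2.1 = 1), decide (x.2.2 = 1))
def psi (b : B) : G := (if b.1 then 1 else 0, if b.2.1 then 1 else 0, if b.2.2 then 1 else 0)
def bit (v : ZMod 2) : Bool := decide (v = 1)

lemma psi_phi : ∀ x : G, psi (phi x) = x := by decide
lemma phi_psi : ∀ b : B, phi (psi b) = b := by decide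
lemma phi_zero : phi 0 = (false, false, false) := by decide
lemma phi_inj {x y : G} (h : phi x = phi y) : x = y := by
  have := congrArg psi h; rwa [psi_phi, psi_phi] at this
lemma dotb_phi : ∀ x y : G, dotb (phi x) (phi y) = bit (dot x y) := by decide
lemma bit_inj : ∀ u v : ZMod 2, bit u = bit v → u = v := by decide
lemma bit_add : ∀ u v : ZMod 2, bit (u + v) = xor (bit u) (bit v) := by decide
lemma bit_zero : bit 0 = false := by decide
lemma bit_one : bit 1 = true := by decide

lemma trichotomyG (l : G → ZMod 2) (y₂ : G) (hy₂ : y₂ ≠ 0)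
    (h0 : l 0 = 0) (h2 : l y₂ = 0) :
    (∃ t : G, ∀ y : G, y ≠ 0 → y ≠ y₂ → l y = dot t y) ∨
    (∃ t y0 : G, y0 ≠ 0 ∧ y0 ≠ y₂ ∧
      ∀ y : G, y ≠ 0 → y ≠ y₂ → l y = dot t y + (if y = y0 then 1 else 0)) ∨
    (∃ t : G, ∀ y : G, y ≠ 0 → y ≠ y₂ → l y = dot t y + 1) := by
  classical
  set tup : Bool×Bool×Bool×Bool×Bool×Bool×Bool×Bool :=
    (bit (l (0,0,0)), bit (l (0,0,1)), bit (l (0,1,0)), bit (l (0,1,1)),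
     bit (l (1,0,0)), bit (l (1,0,1)), bit (l (1,1,0)), bit (l (1,1,1))) with htup
  have happ : ∀ y : G, appB tup (phi y) = bit (l y) := by
    intro y
    obtain ⟨a, b, c⟩ := y
    have h : ∀ u : ZMod 2, u = 0 ∨ u = 1 := by decide
    rcases h a with rfl|rfl <;> rcases h b with rfl|rfl <;> rcases h c with rfl|rfl <;> rfl
  have hphiy₂ : phi y₂ ≠ (false, false, false) := by
    intro hc; exact hy₂ (phi_inj (hc.trans phi_zero.symm))
  have hg1 : appB tup (false,false,false) = false := by
    have := happ 0; rw [phi_zero] at this; rw [this, h0, bit_zero]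
  have hg2 : appB tup (phi y₂) = false := by rw [happ y₂, h2, bit_zero]
  have hmemne : ∀ y : G, y ≠ 0 → phi y ≠ (false,false,false) := by
    intro y hy hc; exact hy (phi_inj (hc.trans phi_zero.symm))
  have hmemne2 : ∀ y : G, y ≠ y₂ → phi y ≠ phi y₂ := by
    intro y hy hc; exact hy (phi_inj hc)
  rcases trichotomyB tup (phi y₂) hphiy₂ hg1 hg2 with ⟨t, ht⟩ | ⟨t, y0, hy01, hy02, ht⟩ | ⟨t, ht⟩
  · left
    refine ⟨psi t, fun y hy1 hy2 => ?_⟩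
    have := ht (phi y) (hmemne y hy1) (hmemne2 y hy2)
    rw [happ y] at this
    rw [show t = phi (psi t) from (phi_psi t).symm, dotb_phi] at this
    exact bit_inj _ _ this
  · right; left
    refine ⟨psi t, psi y0, ?_, ?_, fun y hy1 hy2 => ?_⟩
    · intro hc
      apply hy01
      rw [← phi_psi y0, hc, phi_zero]
    · intro hc
      apply hy02
      rw [← phi_psi y0, hc]
    · have := ht (phi y) (hmemne y hy1) (hmemne2 y hy2)
      rw [happ y] at this
      rw [show t = phi (psi t) from (phi_psi t).symm, dotb_phi] at this
      have hdec : (decide (phi y = y0)) = (decide (y = psi y0)) := by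
        apply decide_eq_decide.mpr
        constructor
        · intro h; rw [← h, psi_phi]
        · intro h; rw [h, phi_psi]
      rw [hdec] at this
      apply bit_inj
      rw [this, bit_add]
      congr 1
      by_cases h : y = psi y0
      · simp [h, bit_one]
      · simp [h, bit_zero]
  · right; right
    refine ⟨psi t, fun y hy1 hy2 => ?_⟩
    have := ht (phi y) (hmemne y hy1) (hmemne2 y hy2)
    rw [happ y] at this
    rw [show t = phi (psi t) from (phi_psi t).symm, dotb_phi] at this
    apply bit_inj
    rw [this, bit_add, bit_one]
    cases bit (dot (psi t) y) <;> rfl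
lemma charFn_zero (f : G → ℝ) : charFn f 0 = ∑ x : G, f x := by
  unfold charFn
  exact Finset.sum_congr rfl fun x _ => by rw [pairing_zero_right, one_mul]

theorem stmt6' (p : G → ℝ) (hp : IsProb p)
    (hmax : ∀ x : G, p x ≤ p 0) (hgt : 1/4 < p 0)
    (X₂ : AddSubgroup G) (hX₂ : Nat.card X₂ = 4)
    (hII4a : measOf p (X₂ : Set G) = 1/2)
    (hII4b : ∀ K : AddSubgroup G, Nat.card K = 4 → K ≠ X₂ →
      VSet p (K : Set G) ∨ VSet p ((K : Set G))ᶜ) :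
    TEC p := by
  classical
  intro q hq habs
  obtain ⟨y₂, hy₂ne, hy₂mem⟩ := exists_y2 X₂ hX₂
  have hX₂eq : X₂ = Ksub y₂ := by
    ext x; rw [hy₂mem x, mem_Ksub]
  have hcy₂ : charFn p y₂ = 0 := by
    have hs : (X₂ : Set G) = (Ksub y₂ : Set G) := by rw [hX₂eq]
    rw [hs, measK p hp.2 y₂] at hII4a
    linarith
  have hdy₂ : charFn q y₂ = 0 := by
    have := habs y₂
    rw [hcy₂, abs_zero, abs_eq_zero] at this
    exact this
  have hc0 : charFn p 0 = 1 := by rw [charFn_zero, hp.2]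
  have hd0 : charFn q 0 = 1 := by rw [charFn_zero, hq.2]
  set l : G → ZMod 2 := fun y => if charFn q y = charFn p y then 0 else 1 with hldef
  have hl : ∀ y : G, charFn q y = (-1:ℝ)^((l y).val) * charFn p y := by
    intro y
    by_cases h : charFn q y = charFn p y
    · have : l y = 0 := by rw [hldef]; simp [h]
      rw [this, show ZMod.val (0 : ZMod 2) = 0 from rfl, pow_zero, one_mul]; exact h
    · have hly : l y = 1 := by rw [hldef]; simp [h]
      rcases abs_eq_abs.mp (habs y) with h1|h1
      · exact absurd h1 h
      · rw [hly, show ZMod.val (1 : ZMod 2) = 1 from rfl, pow_one]; linarith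
  have hl0 : l 0 = 0 := by rw [hldef]; simp [hc0, hd0]
  have hly₂ : l y₂ = 0 := by rw [hldef]; simp [hcy₂, hdy₂]
  rcases trichotomyG l y₂ hy₂ne hl0 hly₂ with ⟨t, hch⟩ | ⟨t, y0, hy0ne, hy0ne₂, hch⟩ | ⟨t, hch⟩
  · -- character case : q is the shift of p by t
    have hd : ∀ y : G, charFn q y = pairing t y * charFn p y := by
      intro y
      by_cases h0 : y = 0
      · subst h0; rw [hd0, hc0, pairing_zero_right, one_mul]
      · by_cases h2 : y = y₂
        · subst h2; rw [hdy₂, hcy₂, mul_zero]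
        · rw [hl y, hch y h0 h2, ← pairing_eq]
    refine ⟨t, fun e => ?_⟩
    have e1 := inv8 q e
    have e2 := inv8 p (e + t)
    have e3 : ∑ y : G, pairing e y * charFn q y = ∑ y : G, pairing (e + t) y * charFn p y := by
      refine Finset.sum_congr rfl fun y _ => ?_
      rw [hd y, pairing_add]; ring
    rw [e1, e2] at e3
    linarith
  · -- flip at y0 : contradiction via condition (b)
    exfalso
    have hd : ∀ y : G, charFn q y = pairing t y * charFn p y * (if y = y0 then -1 else 1) := by
      intro y
      by_cases h0 : y = 0
      · subst h0
        rw [hd0, hc0, pairing_zero_right, if_neg (fun h => hy0ne h.symm)]; ring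
      · by_cases h2 : y = y₂
        · subst h2; rw [hdy₂, hcy₂]; ring
        · rw [hl y, hch y h0 h2, neg_one_val_add, ← pairing_eq]
          by_cases h3 : y = y0
          · rw [if_pos h3, if_pos h3, show ZMod.val (1 : ZMod 2) = 1 from rfl]; ring
          · rw [if_neg h3, if_neg h3, show ZMod.val (0 : ZMod 2) = 0 from rfl]; ring
    have hKne : Ksub y0 ≠ X₂ := by rw [hX₂eq]; exact Ksub_ne y0 y₂ hy0ne₂
    have hV := hII4b (Ksub y0) (card_Ksub y0 hy0ne) hKne
    have hVx := Vextract p hp.1 hp.2 y0 hy0ne hV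
    have hcompute : ∀ xs : G, 8 * q (xs + t) = 8 * p xs - 2 * (pairing xs y0 * charFn p y0) := by
      intro xs
      have e1 := inv8 q (xs + t)
      have e2 : ∑ y : G, pairing (xs + t) y * charFn q y
          = ∑ y : G, (pairing xs y * charFn p y
              - (if y = y0 then 2 * (pairing xs y * charFn p y) else 0)) := by
        refine Finset.sum_congr rfl fun y _ => ?_
        rw [pairing_add, hd y]
        by_cases h3 : y = y0
        · rw [if_pos h3, if_pos h3]
          linear_combination (-(pairing xs y * charFn p y)) * pairing_self_mul t y
        · rw [if_neg h3, if_neg h3]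
          linear_combination (pairing xs y * charFn p y) * pairing_self_mul t y
      rw [Finset.sum_sub_distrib] at e2
      rw [Finset.sum_ite_eq' Finset.univ y0
        (fun y => 2 * (pairing xs y * charFn p y)), if_pos (Finset.mem_univ y0)] at e2
      rw [inv8 p xs] at e2
      rw [e2] at e1
      linarith
    rcases hVx with ⟨xs, hdot, hlt⟩ | ⟨xs, hdot, hlt⟩
    · have hpair : pairing xs y0 = 1 := by
        rw [pairing_eq, hdot, show ZMod.val (0 : ZMod 2) = 0 from rfl, pow_zero]
      have := hcompute xs
      rw [hpair] at this
      have hq0 := hq.1 (xs + t)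
      linarith
    · have hdot1 : dot xs y0 = 1 := by
        have hv : ∀ v : ZMod 2, v ≠ 0 → v = 1 := by decide
        exact hv _ hdot
      have hpair : pairing xs y0 = -1 := by
        rw [pairing_eq, hdot1, show ZMod.val (1 : ZMod 2) = 1 from rfl, pow_one]
      have := hcompute xs
      rw [hpair] at this
      have hq0 := hq.1 (xs + t)
      linarith
  · -- global flip : contradiction via p 0 > 1/4
    exfalso
    have hd : ∀ y : G, y ≠ 0 → charFn q y = -(pairing t y * charFn p y) := by
      intro y h0
      by_cases h2 : y = y₂
      · subst h2; rw [hdy₂, hcy₂]; ring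
      · rw [hl y, hch y h0 h2, neg_one_val_add, ← pairing_eq,
          show ZMod.val (1 : ZMod 2) = 1 from rfl]; ring
    have e1 := inv8 q t
    have e2 : ∑ y : G, pairing t y * charFn q y
        = pairing t 0 * charFn q 0 + ∑ y ∈ Finset.univ.erase 0, pairing t y * charFn q y :=
      (Finset.add_sum_erase _ _ (Finset.mem_univ 0)).symm
    have e3 : ∑ y ∈ Finset.univ.erase 0, pairing t y * charFn q y
        = ∑ y ∈ Finset.univ.erase 0, -(charFn p y) := by
      refine Finset.sum_congr rfl fun y hy => ?_
      have hy0 : y ≠ 0 := (Finset.mem_erase.mp hy).1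
      rw [hd y hy0]
      linear_combination (-(charFn p y)) * pairing_self_mul t y
    have e4 : ∑ y ∈ Finset.univ.erase 0, charFn p y = (∑ y : G, charFn p y) - charFn p 0 := by
      have := Finset.add_sum_erase Finset.univ (fun y => charFn p y) (Finset.mem_univ (0:G))
      linarith
    have e5 : ∑ y : G, charFn p y = 8 * p 0 := by
      have := inv8 p 0
      rw [Finset.sum_congr rfl fun y _ => by rw [pairing_zero_left, one_mul]] at this
      exact this
    rw [Finset.sum_neg_distrib, e4, e5, hc0] at e3
    rw [e3, pairing_zero_right, hd0] at e2
    rw [e2] at e1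
    have hq0 := hq.1 t
    linarith

/-- `a_max = μ({0}) > 1/4`, with a decomposition `G = X₁ ⊕ X₂` satisfying
condition II.4, implies `μ ∈ TEC(G)`. -/
theorem stmt6 (p : G → ℝ) (hp : IsProb p)
    (hmax : ∀ x : G, p x ≤ p 0) (hgt : 1/4 < p 0)
    (X₁ X₂ : AddSubgroup G) (hX₁ : Nat.card X₁ = 2) (hX₂ : Nat.card X₂ = 4)
    (hinf : X₁ ⊓ X₂ = ⊥) (hsup : X₁ ⊔ X₂ = ⊤)
    (hII4a : measOf p (X₂ : Set G) = 1/2)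
    (hII4b : ∀ K : AddSubgroup G, Nat.card K = 4 → K ≠ X₂ →
      VSet p (K : Set G) ∨ VSet p ((K : Set G))ᶜ)
    (hII4c : ∀ K : AddSubgroup G, Nat.card K = 4 →
      USet p (K : Set G) ∨ USet p ((K : Set G))ᶜ) :
    TEC p := by
  exact stmt6' p hp hmax hgt X₂ hX₂ hII4a hII4b
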